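/- There exists an absolute constant C > 0 with the following property. Let q be a probability distribution on [n] with ‖q − U_n‖_2 ≥ ε/√n for some ε ∈ (0,1), let m be a real number with m ≥ C·√n/ε², let X_1,…,X_n be independent random variables with X_i distributed as Poi(m·q_i), and let Z = Σ_{i=1}^n ((X_i − m/n)² − X_i). Then E[Z] ≥ 8m/√n and 16·Var[Z] ≤ (E[Z])². -/

import Mathlib

open Finset ProbabilityTheory MeasureTheory

/-- The probability mass that a function on `Fin n` assigns to the (0-indexed)
interval `[a, b)`. -/
noncomputable def intervalMass {n : ℕ} (q : Fin n → ℝ) (a b : ℕ) : ℝ :=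
  ∑ j ∈ Finset.univ.filter (fun j : Fin n => a ≤ (j : ℕ) ∧ (j : ℕ) < b), q j

/-- `q` is a probability distribution on `[n]` (identified with `Fin n`). -/
noncomputable def IsDist {n : ℕ} (q : Fin n → ℝ) : Prop := (∀ i, 0 ≤ q i) ∧ ∑ i, q i = 1

/-- The `A_k` distance between `p` and `q` on `Fin n`: the supremum, over all partitions of
`Fin n` into `k` consecutive intervals (described by their monotone sequence of boundary
points), of the sum of the discrepancies `|p(I) - q(I)|` over the intervals. -/
noncomputable def AkDist (n k : ℕ) (p q : Fin n → ℝ) : ℝ :=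
  sSup { x : ℝ | ∃ b : Fin (k + 1) → ℕ, Monotone b ∧ b 0 = 0 ∧ b (Fin.last k) = n ∧
    x = ∑ i : Fin k,
      |intervalMass p (b i.castSucc) (b i.succ) - intervalMass q (b i.castSucc) (b i.succ)| }

/-- The `L1` distance between two functions on `Fin n`. -/
noncomputable def L1Dist {n : ℕ} (p q : Fin n → ℝ) : ℝ := ∑ i, |p i - q i|

/-- The `L2` distance between two functions on `Fin n`. -/
noncomputable def L2Dist {n : ℕ} (p q : Fin n → ℝ) : ℝ := Real.sqrt (∑ i, (p i - q i) ^ 2)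

/-- The uniform distribution on `Fin n`. -/
noncomputable def unif (n : ℕ) : Fin n → ℝ := fun _ => 1 / n

/-- The probability that the `m`-fold product measure `q^{⊗m}` assigns to a set
`A ⊆ [n]^m` of sample sequences. -/
noncomputable def prodProb {n m : ℕ} (q : Fin n → ℝ) (A : Finset (Fin m → Fin n)) : ℝ :=
  ∑ x ∈ A, ∏ j, q (x j)

/-- The reduced distribution of `q` w.r.t. the partition of `Fin n` into `ℓ` consecutive
intervals of equal length `n / ℓ` (assuming `ℓ ∣ n`). -/
noncomputable def reducedDist {n : ℕ} (q : Fin n → ℝ) (ℓ : ℕ) : Fin ℓ → ℝ :=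
  fun i => intervalMass q ((i : ℕ) * (n / ℓ)) (((i : ℕ) + 1) * (n / ℓ))

/-- `p` is a `t`-piecewise degree-`d` function on `Fin n`: there is a partition of `Fin n`
into `t` consecutive intervals on each of which `p` agrees with a real polynomial of degree
at most `d`. -/
noncomputable def IsPiecewisePoly {n : ℕ} (t d : ℕ) (p : Fin n → ℝ) : Prop :=
  ∃ b : Fin (t + 1) → ℕ, Monotone b ∧ b 0 = 0 ∧ b (Fin.last t) = n ∧
    ∀ i : Fin t, ∃ P : Polynomial ℝ, P.degree ≤ (d : ℕ) ∧
      ∀ x : Fin n, b i.castSucc ≤ (x : ℕ) → (x : ℕ) < b i.succ → p x = P.eval ((x : ℕ) : ℝ)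

/-- `q` is `k`-flat: there is a partition of `Fin n` into `k` consecutive intervals
on each of which `q` is constant. -/
noncomputable def IsKFlat {n : ℕ} (k : ℕ) (q : Fin n → ℝ) : Prop :=
  ∃ b : Fin (k + 1) → ℕ, Monotone b ∧ b 0 = 0 ∧ b (Fin.last k) = n ∧
    ∀ i : Fin k, ∃ c : ℝ, ∀ x : Fin n, b i.castSucc ≤ (x : ℕ) → (x : ℕ) < b i.succ → q x = c

/-- The term `Discr(I)² / width(I)^{1/8}` for the interval `I = [a, b)` in `Fin n`, where
the discrepancy is `Discr(I) = |q(I) - U_n(I)|` and the width is `|I|/n` (relative to the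
uniform distribution `U_n`). -/
noncomputable def ssTerm {n : ℕ} (q : Fin n → ℝ) (a b : ℕ) : ℝ :=
  |intervalMass q a b - ((b - a : ℕ) : ℝ) / n| ^ 2 / (((b - a : ℕ) : ℝ) / n) ^ ((1 : ℝ) / 8)

/-- The squared scale-sensitive-`L2` distance between `q` and the uniform distribution
on `Fin n`, at scale `1/k`: the supremum, over all partitions of `Fin n` into consecutive
nonempty intervals each of width at most `1/k`, of `∑ Discr(I)² / width(I)^{1/8}`. -/
noncomputable def ssDistSq (n k : ℕ) (q : Fin n → ℝ) : ℝ :=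
  sSup { x : ℝ | ∃ r : ℕ, ∃ b : Fin (r + 1) → ℕ, StrictMono b ∧ b 0 = 0 ∧ b (Fin.last r) = n ∧
    (∀ i : Fin r, ((b i.succ - b i.castSucc : ℕ) : ℝ) / n ≤ 1 / k) ∧
    x = ∑ i : Fin r, ssTerm q (b i.castSucc) (b i.succ) }
open Real
open scoped NNReal ENNReal


lemma pois_hasSum_descFactorial (r : ℝ≥0) (j : ℕ) :
    HasSum (fun n : ℕ => poissonPMFReal r n * (n.descFactorial j : ℝ)) ((r : ℝ) ^ j) := by
  set l : ℝ := (r : ℝ) with hl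
  have h0 : ∀ i < j, poissonPMFReal r i * (i.descFactorial j : ℝ) = 0 := by
    intro i hi
    simp [Nat.descFactorial_eq_zero_iff_lt.2 hi]
  have hshift : HasSum (fun n : ℕ => poissonPMFReal r (n + j) * ((n + j).descFactorial j : ℝ))
      (l ^ j) := by
    have heq : (fun n : ℕ => poissonPMFReal r (n + j) * ((n + j).descFactorial j : ℝ)) =
        fun n : ℕ => (exp (-l) * l ^ j) * (l ^ n / n.factorial) := by
      funext n
      have hd : (n.factorial : ℕ) * ((n + j).descFactorial j) = (n + j).factorial := by
        have := Nat.factorial_mul_descFactorial (n := n + j) (k := j) (Nat.le_add_left _ _)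
        simpa using this
      have hdr : ((n + j).descFactorial j : ℝ) = ((n + j).factorial : ℝ) / (n.factorial : ℝ) := by
        rw [eq_div_iff (by positivity)]
        rw [mul_comm]
        exact_mod_cast hd
      rw [poissonPMFReal, hdr, ← hl]
      have hfac : ((n + j).factorial : ℝ) ≠ 0 := by positivity
      field_simp
      ring
    rw [heq]
    have h2 := (NormedSpace.expSeries_div_hasSum_exp l).mul_left (exp (-l) * l ^ j)
    rw [← Real.exp_eq_exp_ℝ] at h2
    have e : exp (-l) * l ^ j * exp l = l ^ j := by
      rw [mul_comm (exp (-l)) (l ^ j), mul_assoc, ← Real.exp_add]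
      simp
    rw [e] at h2
    exact h2
  have hz : ∑ i ∈ Finset.range j, poissonPMFReal r i * (i.descFactorial j : ℝ) = 0 :=
    Finset.sum_eq_zero fun i hi => h0 i (Finset.mem_range.1 hi)
  have := (hasSum_nat_add_iff' (f := fun n : ℕ => poissonPMFReal r n * (n.descFactorial j : ℝ))
      j (g := l ^ j)).1 (by rw [hz, sub_zero]; exact hshift)
  exact this

lemma pois_integrable_of_summable (r : ℝ≥0) (f : ℕ → ℝ)
    (h : Summable (fun n => poissonPMFReal r n * |f n|)) :
    Integrable f (poissonMeasure r) := by
  constructor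
  · exact (measurable_from_nat (f := f)).aestronglyMeasurable
  · rw [hasFiniteIntegral_def]
    calc ∫⁻ n, (‖f n‖₊ : ℝ≥0∞) ∂(poissonMeasure r)
        = ∑' n : ℕ, (‖f n‖₊ : ℝ≥0∞) * (poissonMeasure r) {n} := lintegral_countable' _
      _ = ∑' n : ℕ, ENNReal.ofReal (poissonPMFReal r n * |f n|) := by
          congr 1; funext n
          rw [show (poissonMeasure r) {n} = poissonPMF r n from
            by rw [poissonMeasure_singleton]; rfl]
          rw [show poissonPMF r n = ENNReal.ofReal (poissonPMFReal r n) from rfl]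
          rw [ENNReal.ofReal_mul poissonPMFReal_nonneg, mul_comm]
          congr 1
          rw [ENNReal.ofReal, Real.toNNReal_abs]; simp [Real.nnabs, nnnorm]; rfl
      _ = ENNReal.ofReal (∑' n, poissonPMFReal r n * |f n|) := by
          rw [ENNReal.ofReal_tsum_of_nonneg (fun n => mul_nonneg poissonPMFReal_nonneg (abs_nonneg _)) h]
      _ < ⊤ := ENNReal.ofReal_lt_top

lemma pois_key (r : ℝ≥0) (a : Fin 5 → ℝ) (F : ℕ → ℝ)
    (hF : ∀ n : ℕ, F n = ∑ j : Fin 5, a j * (n.descFactorial (j : ℕ) : ℝ)) :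
    Integrable F (poissonMeasure r) ∧
      ∫ n, F n ∂(poissonMeasure r) = ∑ j : Fin 5, a j * (r : ℝ) ^ (j : ℕ) := by
  have hs : ∀ j : Fin 5, HasSum
      (fun n : ℕ => a j * (poissonPMFReal r n * (n.descFactorial (j : ℕ) : ℝ)))
      (a j * (r : ℝ) ^ (j : ℕ)) :=
    fun j => (pois_hasSum_descFactorial r j).mul_left (a j)
  have hsum : HasSum (fun n : ℕ => poissonPMFReal r n * F n)
      (∑ j : Fin 5, a j * (r : ℝ) ^ (j : ℕ)) := by
    have := hasSum_sum (f := fun (j : Fin 5) (n : ℕ) =>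
      a j * (poissonPMFReal r n * (n.descFactorial (j : ℕ) : ℝ)))
      (a := fun j => a j * (r : ℝ) ^ (j : ℕ)) (s := Finset.univ) (fun j _ => hs j)
    convert this using 1
    funext n
    rw [hF n, Finset.mul_sum]
    congr 1; funext j; ring
  have hint : Integrable F (poissonMeasure r) := by
    apply pois_integrable_of_summable
    have hb : HasSum (fun n : ℕ => ∑ j : Fin 5,
        |a j| * (poissonPMFReal r n * (n.descFactorial (j : ℕ) : ℝ)))
        (∑ j : Fin 5, |a j| * (r : ℝ) ^ (j : ℕ)) :=
      hasSum_sum fun j _ => (pois_hasSum_descFactorial r j).mul_left |a j|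
    apply Summable.of_nonneg_of_le (fun n => mul_nonneg poissonPMFReal_nonneg (abs_nonneg _)) _ hb.summable
    intro n
    rw [hF n]
    calc poissonPMFReal r n * |∑ j : Fin 5, a j * (n.descFactorial (j : ℕ) : ℝ)|
        ≤ poissonPMFReal r n * ∑ j : Fin 5, |a j * (n.descFactorial (j : ℕ) : ℝ)| := by
          apply mul_le_mul_of_nonneg_left (Finset.abs_sum_le_sum_abs _ _) poissonPMFReal_nonneg
      _ = ∑ j : Fin 5, |a j| * (poissonPMFReal r n * (n.descFactorial (j : ℕ) : ℝ)) := by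
          rw [Finset.mul_sum]
          congr 1; funext j
          rw [abs_mul, abs_of_nonneg (by positivity : (0:ℝ) ≤ (n.descFactorial (j : ℕ) : ℝ))]
          ring
  refine ⟨hint, ?_⟩
  have hPo : poissonMeasure r = (poissonPMF r).toMeasure := Measure.ext_of_singleton fun a => by
      rw [poissonMeasure_singleton, PMF.toMeasure_apply_singleton _ _ (MeasurableSet.singleton a)]
      exact poissonPMFReal_ofReal_eq_poissonPMF r a
  rw [hPo, PMF.integral_eq_tsum _ _ (hPo ▸ hint)]
  rw [← hsum.tsum_eq]
  congr 1; funext n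
  rw [show poissonPMF r n = ENNReal.ofReal (poissonPMFReal r n) from rfl,
    ENNReal.toReal_ofReal poissonPMFReal_nonneg, smul_eq_mul]
lemma df1 (n : ℕ) : (n.descFactorial 1 : ℝ) = (n : ℝ) := by simp
lemma df2 (n : ℕ) : (n.descFactorial 2 : ℝ) = (n : ℝ) ^ 2 - n := by
  match n with
  | 0 => simp
  | (k + 1) => simp [Nat.descFactorial]; push_cast; ring
lemma df3 (n : ℕ) : (n.descFactorial 3 : ℝ) = (n : ℝ) ^ 3 - 3 * (n : ℝ) ^ 2 + 2 * n := by
  match n with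
  | 0 => simp
  | 1 => simp [Nat.descFactorial]; norm_num
  | (k + 2) => simp [Nat.descFactorial]; push_cast; ring
lemma df4 (n : ℕ) :
    (n.descFactorial 4 : ℝ) = (n : ℝ) ^ 4 - 6 * (n : ℝ) ^ 3 + 11 * (n : ℝ) ^ 2 - 6 * n := by
  match n with
  | 0 => simp
  | 1 => simp [Nat.descFactorial]; norm_num
  | 2 => simp [Nat.descFactorial]; norm_num
  | (k + 3) => simp [Nat.descFactorial]; push_cast; ring

lemma pois_mean (r : ℝ≥0) (c : ℝ) :
    Integrable (fun k : ℕ => ((k : ℝ) - c) ^ 2 - k) (poissonMeasure r) ∧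
      ∫ k, (((k : ℝ) - c) ^ 2 - k) ∂(poissonMeasure r) = ((r : ℝ) - c) ^ 2 := by
  have h := pois_key r ![c ^ 2, -2 * c, 1, 0, 0] (fun k : ℕ => ((k : ℝ) - c) ^ 2 - k) ?_
  · refine ⟨h.1, ?_⟩
    rw [h.2, Fin.sum_univ_five]
    simp only [Matrix.cons_val_zero, Matrix.cons_val_one, Matrix.head_cons,
      Matrix.cons_val_two, Matrix.tail_cons, Matrix.cons_val_three, Matrix.cons_val_four,
      show ((0:Fin 5):ℕ) = 0 from rfl, show ((1:Fin 5):ℕ) = 1 from rfl,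
      show ((2:Fin 5):ℕ) = 2 from rfl, show ((3:Fin 5):ℕ) = 3 from rfl,
      show ((4:Fin 5):ℕ) = 4 from rfl]
    ring
  · intro n
    rw [Fin.sum_univ_five]
    simp only [Matrix.cons_val_zero, Matrix.cons_val_one, Matrix.head_cons,
      Matrix.cons_val_two, Matrix.tail_cons, Matrix.cons_val_three, Matrix.cons_val_four,
      show ((0:Fin 5):ℕ) = 0 from rfl, show ((1:Fin 5):ℕ) = 1 from rfl,
      show ((2:Fin 5):ℕ) = 2 from rfl, show ((3:Fin 5):ℕ) = 3 from rfl,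
      show ((4:Fin 5):ℕ) = 4 from rfl,
      Nat.descFactorial_zero, df1, df2, df3, df4, Nat.cast_one]
    ring

lemma pois_sq (r : ℝ≥0) (c : ℝ) :
    Integrable (fun k : ℕ => (((k : ℝ) - c) ^ 2 - k) ^ 2) (poissonMeasure r) ∧
      ∫ k, ((((k : ℝ) - c) ^ 2 - k) ^ 2) ∂(poissonMeasure r) =
        ((r : ℝ) - c) ^ 4 + 2 * (r : ℝ) ^ 2 + 4 * (r : ℝ) * ((r : ℝ) - c) ^ 2 := by
  have h := pois_key r
    ![c ^ 4, 4 * c ^ 2 - 4 * c ^ 3, 6 * c ^ 2 - 8 * c + 2, 4 - 4 * c, 1]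
    (fun k : ℕ => (((k : ℝ) - c) ^ 2 - k) ^ 2) ?_
  · refine ⟨h.1, ?_⟩
    rw [h.2, Fin.sum_univ_five]
    simp only [Matrix.cons_val_zero, Matrix.cons_val_one, Matrix.head_cons,
      Matrix.cons_val_two, Matrix.tail_cons, Matrix.cons_val_three, Matrix.cons_val_four,
      show ((0:Fin 5):ℕ) = 0 from rfl, show ((1:Fin 5):ℕ) = 1 from rfl,
      show ((2:Fin 5):ℕ) = 2 from rfl, show ((3:Fin 5):ℕ) = 3 from rfl,
      show ((4:Fin 5):ℕ) = 4 from rfl]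
    ring
  · intro n
    rw [Fin.sum_univ_five]
    simp only [Matrix.cons_val_zero, Matrix.cons_val_one, Matrix.head_cons,
      Matrix.cons_val_two, Matrix.tail_cons, Matrix.cons_val_three, Matrix.cons_val_four,
      show ((0:Fin 5):ℕ) = 0 from rfl, show ((1:Fin 5):ℕ) = 1 from rfl,
      show ((2:Fin 5):ℕ) = 2 from rfl, show ((3:Fin 5):ℕ) = 3 from rfl,
      show ((4:Fin 5):ℕ) = 4 from rfl,
      Nat.descFactorial_zero, df1, df2, df3, df4, Nat.cast_one]
    ring


lemma final_numeric (m s t ε : ℝ) (hε : 0 < ε) (hε1 : ε < 1) (hs1 : 1 ≤ s) (ht0 : 0 ≤ t)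
    (h1 : 256 * s ≤ m * ε ^ 2) (h2 : ε ≤ t * s) (hm0 : 0 < m) :
    8 * m / s ≤ m ^ 2 * t ^ 2 ∧
      16 * (2 * m ^ 2 * (t ^ 2 + 1 / s ^ 2) + 4 * m ^ 3 * ((t + 1 / s ^ 2) * t ^ 2)) ≤
        (m ^ 2 * t ^ 2) ^ 2 := by
  have hs0 : (0 : ℝ) < s := lt_of_lt_of_le one_pos hs1
  have ht0' : 0 < t := by nlinarith
  have hme : 256 * s ≤ m * ε := by nlinarith [mul_nonneg (mul_nonneg hm0.le hε.le) (sub_nonneg.2 hε1.le)]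
  have hmt : 256 ≤ m * t := by nlinarith [mul_nonneg hm0.le (sub_nonneg.2 h2)]
  have hets : ε ^ 2 ≤ t ^ 2 * s ^ 2 := by nlinarith
  have hmts : 256 ≤ m * t ^ 2 * s := by
    nlinarith [mul_nonneg hm0.le (sub_nonneg.2 hets)]
  have hmtss : 256 ≤ m * t ^ 2 * s ^ 2 := by nlinarith [mul_nonneg (mul_pos hm0 (mul_pos ht0' ht0')).le (sub_nonneg.2 hs1)]
  constructor
  · rw [div_le_iff₀ hs0]
    have h3 : 256 ≤ m * t ^ 2 * s := hmts
    nlinarith [mul_nonneg hm0.le (sub_nonneg.2 h3)]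
  · have hA : 65536 ≤ (m * t) ^ 2 := by nlinarith
    have hB : 65536 ≤ (m * t ^ 2 * s) ^ 2 := by nlinarith
    have k1 : 0 ≤ (m * t * s) ^ 2 * ((m * t) ^ 2 - 65536) :=
      mul_nonneg (sq_nonneg _) (sub_nonneg.2 hA)
    have k1' : (m * t * s) ^ 2 * ((m * t) ^ 2 - 65536)
        = m ^ 4 * t ^ 4 * s ^ 2 - 65536 * (m ^ 2 * t ^ 2 * s ^ 2) := by ring
    have q1 : 32 * (m ^ 2 * t ^ 2 * s ^ 2) ≤ 1 / 4 * (m ^ 4 * t ^ 4 * s ^ 2) := by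
      rw [k1'] at k1
      nlinarith [sq_nonneg (m * t * s)]
    have k2 : 0 ≤ m ^ 2 * ((m * t ^ 2 * s) ^ 2 - 65536) :=
      mul_nonneg (sq_nonneg _) (sub_nonneg.2 hB)
    have k2' : m ^ 2 * ((m * t ^ 2 * s) ^ 2 - 65536)
        = m ^ 4 * t ^ 4 * s ^ 2 - 65536 * m ^ 2 := by ring
    have q2 : 32 * m ^ 2 ≤ 1 / 4 * (m ^ 4 * t ^ 4 * s ^ 2) := by
      rw [k2'] at k2
      nlinarith [sq_nonneg m]
    have k3 : 0 ≤ m ^ 3 * t ^ 3 * s ^ 2 * (m * t - 256) :=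
      mul_nonneg (by positivity) (sub_nonneg.2 hmt)
    have k3' : m ^ 3 * t ^ 3 * s ^ 2 * (m * t - 256)
        = m ^ 4 * t ^ 4 * s ^ 2 - 256 * (m ^ 3 * t ^ 3 * s ^ 2) := by ring
    have q3 : 64 * (m ^ 3 * t ^ 3 * s ^ 2) ≤ 1 / 4 * (m ^ 4 * t ^ 4 * s ^ 2) := by
      rw [k3'] at k3
      linarith
    have k4 : 0 ≤ m ^ 3 * t ^ 2 * (m * t ^ 2 * s ^ 2 - 256) :=
      mul_nonneg (by positivity) (sub_nonneg.2 hmtss)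
    have k4' : m ^ 3 * t ^ 2 * (m * t ^ 2 * s ^ 2 - 256)
        = m ^ 4 * t ^ 4 * s ^ 2 - 256 * (m ^ 3 * t ^ 2) := by ring
    have q4 : 64 * (m ^ 3 * t ^ 2) ≤ 1 / 4 * (m ^ 4 * t ^ 4 * s ^ 2) := by
      rw [k4'] at k4
      linarith
    have hmul : 0 < s ^ 2 := by positivity
    rw [← mul_le_mul_iff_of_pos_right hmul]
    have e : 16 * (2 * m ^ 2 * (t ^ 2 + 1 / s ^ 2) + 4 * m ^ 3 * ((t + 1 / s ^ 2) * t ^ 2)) * s ^ 2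
        = 32 * (m ^ 2 * t ^ 2 * s ^ 2) + 32 * m ^ 2 + 64 * (m ^ 3 * t ^ 3 * s ^ 2)
          + 64 * (m ^ 3 * t ^ 2) := by
      field_simp
      ring
    rw [e]
    have e2 : (m ^ 2 * t ^ 2) ^ 2 * s ^ 2 = m ^ 4 * t ^ 4 * s ^ 2 := by ring
    rw [e2]
    linarith [q1, q2, q3, q4]

/-- **Mean/variance bounds for the chi-squared statistic in the soundness case.**
There is a universal constant `C > 0` such that if `‖q - U_n‖₂ ≥ ε/√n`, `m ≥ C √n/ε²`, and
`X i ~ Poi(m qᵢ)` are independent, then `Z = ∑ i ((Xᵢ - m/n)² - Xᵢ)` satisfies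
`E[Z] ≥ 8m/√n` and `16 Var[Z] ≤ E[Z]²`. -/
theorem poisson_chi_squared_mean_variance_bound :
    ∃ C : ℝ, 0 < C ∧ ∀ (n : ℕ) (q : Fin n → ℝ) (ε m : ℝ)
      (Ω : Type) [MeasurableSpace Ω] (μ : Measure Ω) [IsProbabilityMeasure μ]
      (X : Fin n → Ω → ℕ),
      1 ≤ n → IsDist q → 0 < ε → ε < 1 →
      ε / Real.sqrt n ≤ L2Dist q (unif n) →
      C * Real.sqrt n / ε ^ 2 ≤ m →
      (∀ i, Measurable (X i)) →
      iIndepFun X μ →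
      (∀ i, μ.map (X i) = poissonMeasure (m * q i).toNNReal) →
      8 * m / Real.sqrt n ≤ ∫ ω, ∑ i, (((X i ω : ℝ) - m / n) ^ 2 - (X i ω : ℝ)) ∂μ ∧
      16 * variance (fun ω => ∑ i, (((X i ω : ℝ) - m / n) ^ 2 - (X i ω : ℝ))) μ ≤
        (∫ ω, ∑ i, (((X i ω : ℝ) - m / n) ^ 2 - (X i ω : ℝ)) ∂μ) ^ 2 := by
  refine ⟨256, by norm_num, ?_⟩
  intro n q ε m Ω _ μ _ X hn hq hε hε1 hL2 hm hmeas hindep hmap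
  have hn' : (0 : ℝ) < n := by exact_mod_cast Nat.lt_of_lt_of_le Nat.zero_lt_one hn
  have hs0 : 0 < Real.sqrt n := Real.sqrt_pos.2 hn'
  have hs1 : 1 ≤ Real.sqrt n := by
    rw [show (1:ℝ) = Real.sqrt 1 from (Real.sqrt_one).symm]
    exact Real.sqrt_le_sqrt (by exact_mod_cast hn)
  have hm0 : 0 < m :=
    lt_of_lt_of_le (by positivity : (0:ℝ) < 256 * Real.sqrt n / ε ^ 2) hm
  set c : ℝ := m / n with hc
  set s : ℝ := Real.sqrt n with hsdef
  set D : ℝ := ∑ i, (q i - 1 / n) ^ 2 with hD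
  set t : ℝ := Real.sqrt D with htdef
  have hD0 : 0 ≤ D := Finset.sum_nonneg fun i _ => sq_nonneg _
  have ht0 : 0 ≤ t := Real.sqrt_nonneg _
  have htD : t ^ 2 = D := Real.sq_sqrt hD0
  have hns : (n : ℝ) = s ^ 2 := (Real.sq_sqrt hn'.le).symm
  -- transfer hL2
  have hL2' : ε ≤ t * s := by
    have : L2Dist q (unif n) = t := by
      simp only [L2Dist, unif, htdef, hD]
    rw [this] at hL2
    exact (div_le_iff₀ hs0).1 hL2
  have h256 : 256 * s ≤ m * ε ^ 2 := by
    rw [← div_le_iff₀ (by positivity : (0:ℝ) < ε ^ 2)]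
    exact hm
  -- per-coordinate facts
  have hrc : ∀ i, ((m * q i).toNNReal : ℝ) = m * q i :=
    fun i => Real.coe_toNNReal _ (mul_nonneg hm0.le (hq.1 i))
  have hgm : Measurable (fun k : ℕ => ((k : ℝ) - c) ^ 2 - (k : ℝ)) := measurable_from_nat
  have hg2m : Measurable (fun k : ℕ => (((k : ℝ) - c) ^ 2 - (k : ℝ)) ^ 2) := measurable_from_nat
  have hInt1 : ∀ i, Integrable (fun ω => ((X i ω : ℝ) - c) ^ 2 - (X i ω : ℝ)) μ := by
    intro i
    have h := (pois_mean (m * q i).toNNReal c).1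
    rw [← hmap i] at h
    exact (integrable_map_measure hgm.aestronglyMeasurable (hmeas i).aemeasurable).1 h
  have hZint : ∀ i, ∫ ω, (((X i ω : ℝ) - c) ^ 2 - (X i ω : ℝ)) ∂μ = (m * q i - c) ^ 2 := by
    intro i
    have h1 : ∫ ω, (((X i ω : ℝ) - c) ^ 2 - (X i ω : ℝ)) ∂μ
        = ∫ k, (((k : ℝ) - c) ^ 2 - (k : ℝ)) ∂(μ.map (X i)) :=
      (integral_map (hmeas i).aemeasurable hgm.aestronglyMeasurable).symm
    rw [h1, hmap i, (pois_mean _ c).2, hrc i]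
  have hMem : ∀ i, MemLp (fun ω => ((X i ω : ℝ) - c) ^ 2 - (X i ω : ℝ)) 2 μ := by
    intro i
    refine (memLp_two_iff_integrable_sq
      (f := fun ω => ((X i ω : ℝ) - c) ^ 2 - (X i ω : ℝ)) ?_).2 ?_
    · exact (hgm.comp (hmeas i)).aestronglyMeasurable
    · have h := (pois_sq (m * q i).toNNReal c).1
      rw [← hmap i] at h
      exact (integrable_map_measure hg2m.aestronglyMeasurable (hmeas i).aemeasurable).1 h
  have hvar : ∀ i, variance (fun ω => ((X i ω : ℝ) - c) ^ 2 - (X i ω : ℝ)) μ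
      = 2 * (m * q i) ^ 2 + 4 * (m * q i) * (m * q i - c) ^ 2 := by
    intro i
    rw [variance_eq_sub (hMem i)]
    have h2 : ∫ ω, ((((X i ω : ℝ) - c) ^ 2 - (X i ω : ℝ)) ^ 2) ∂μ
        = ∫ k, ((((k : ℝ) - c) ^ 2 - (k : ℝ)) ^ 2) ∂(μ.map (X i)) :=
      (integral_map (hmeas i).aemeasurable hg2m.aestronglyMeasurable).symm
    have h3 : μ[(fun ω => ((X i ω : ℝ) - c) ^ 2 - (X i ω : ℝ)) ^ 2]
        = ∫ ω, ((((X i ω : ℝ) - c) ^ 2 - (X i ω : ℝ)) ^ 2) ∂μ := by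
      congr 1
    rw [h3, h2, hmap i, (pois_sq _ c).2, hrc i, hZint i]
    ring
  -- sums
  have hEsum : ∫ ω, ∑ i, (((X i ω : ℝ) - c) ^ 2 - (X i ω : ℝ)) ∂μ
      = ∑ i, (m * q i - c) ^ 2 := by
    rw [integral_finset_sum Finset.univ (fun i _ => hInt1 i)]
    exact Finset.sum_congr rfl fun i _ => hZint i
  have hE : ∑ i, (m * q i - c) ^ 2 = m ^ 2 * D := by
    rw [hD, Finset.mul_sum]
    refine Finset.sum_congr rfl fun i _ => ?_
    rw [hc]
    ring
  have hVarSum : variance (fun ω => ∑ i, (((X i ω : ℝ) - c) ^ 2 - (X i ω : ℝ))) μ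
      = ∑ i, variance (fun ω => ((X i ω : ℝ) - c) ^ 2 - (X i ω : ℝ)) μ := by
    have hfe : (fun ω => ∑ i, (((X i ω : ℝ) - c) ^ 2 - (X i ω : ℝ)))
        = ∑ i, (fun ω => ((X i ω : ℝ) - c) ^ 2 - (X i ω : ℝ)) := by
      funext ω; simp
    rw [hfe]
    refine IndepFun.variance_sum (fun i _ => hMem i) ?_
    intro i _ j _ hij
    exact (hindep.indepFun hij).comp hgm hgm
  -- bound the variance sum
  have hsum1 : ∑ i, q i = 1 := hq.2
  have hQ : ∑ i, (q i) ^ 2 = D + 1 / n := by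
    have h1 : ∀ i ∈ Finset.univ, (q i) ^ 2
        = ((q i - 1 / n) ^ 2 + (2 / n) * q i) - 1 / (n:ℝ) ^ 2 := fun i _ => by ring
    rw [Finset.sum_congr rfl h1, Finset.sum_sub_distrib, Finset.sum_add_distrib,
      ← Finset.mul_sum, hsum1, Finset.sum_const, Finset.card_univ, Fintype.card_fin,
      nsmul_eq_mul, ← hD]
    field_simp
    ring
  have habs : ∀ i, q i ≤ t + 1 / n := by
    intro i
    have h1 : (q i - 1 / n) ^ 2 ≤ D :=
      Finset.single_le_sum (f := fun i => (q i - 1 / n) ^ 2)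
        (fun i _ => sq_nonneg _) (Finset.mem_univ i)
    have h2 : |q i - 1 / n| ≤ t := by
      rw [← Real.sqrt_sq_eq_abs]
      exact Real.sqrt_le_sqrt h1
    have := (abs_le.1 h2).2
    linarith
  have hVarBound : ∑ i, variance (fun ω => ((X i ω : ℝ) - c) ^ 2 - (X i ω : ℝ)) μ
      ≤ 2 * m ^ 2 * (D + 1 / n) + 4 * m ^ 3 * ((t + 1 / n) * D) := by
    have h1 : ∀ i ∈ Finset.univ,
        variance (fun ω => ((X i ω : ℝ) - c) ^ 2 - (X i ω : ℝ)) μ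
        = 2 * m ^ 2 * (q i) ^ 2 + 4 * m ^ 3 * (q i * (q i - 1 / n) ^ 2) := by
      intro i _
      rw [hvar i, hc]
      ring
    rw [Finset.sum_congr rfl h1, Finset.sum_add_distrib, ← Finset.mul_sum, ← Finset.mul_sum, hQ]
    have h2 : ∑ i, q i * (q i - 1 / n) ^ 2 ≤ (t + 1 / n) * D := by
      rw [hD, Finset.mul_sum]
      refine Finset.sum_le_sum fun i _ => ?_
      exact mul_le_mul_of_nonneg_right (habs i) (sq_nonneg _)
    nlinarith [h2, pow_pos hm0 3]
  -- numeric conclusion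
  obtain ⟨g1, g2⟩ := final_numeric m s t ε hε hε1 hs1 ht0 h256 hL2' hm0
  constructor
  · rw [hEsum, hE, ← htD]
    exact g1
  · rw [hEsum, hE, hVarSum]
    calc 16 * (∑ i, variance (fun ω => ((X i ω : ℝ) - c) ^ 2 - (X i ω : ℝ)) μ)
        ≤ 16 * (2 * m ^ 2 * (D + 1 / n) + 4 * m ^ 3 * ((t + 1 / n) * D)) := by
          linarith [hVarBound]
      _ ≤ (m ^ 2 * D) ^ 2 := by
          rw [← htD, hns]
          exact g2
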